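/- Let N be a positive integer, let g be an N-density-like arithmetic function such that the series ∑_{d=1}^∞ (1 − g(d))/d converges, set f(n) = ∏_{d|n} g(d), and suppose additionally that there exists c > 0 such that g(d) > c for every d ≥ 1. Then the series A_f* := ∑_{d=1}^∞ (log g(d))/d converges, it equals ∑_{d≥1, gcd(d,N)=1} (log g(d))/d, and A_f* = lim_{x→∞} (1/x) ∑_{n ≤ x} log f(n). Moreover, the mean value A_f of f satisfies A_f ≥ exp(A_f*) = ∏_{d=1}^∞ g(d)^{1/d} > 0; in particular f has a nonzero mean value. -/

import Mathlib

open Filter Finset Topology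

private lemma log_abs_bound {c x : ℝ} (hc : 0 < c) (h1 : c < x) (h2 : x ≤ 1) :
    |Real.log x| ≤ (1 - x) / c := by
  have hx : 0 < x := hc.trans h1
  have hlog : Real.log x ≤ 0 := Real.log_nonpos hx.le h2
  rw [abs_of_nonpos hlog]
  have h3 : Real.log x⁻¹ ≤ x⁻¹ - 1 := Real.log_le_sub_one_of_pos (by positivity)
  rw [Real.log_inv] at h3
  have h4 : x⁻¹ - 1 = (1 - x) / x := by field_simp
  have h5 : (1 - x) / x ≤ (1 - x) / c := by gcongr <;> linarith
  linarith

private lemma sum_divisors_swap (h : ℕ → ℝ) (M : ℕ) :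
    ∑ n ∈ Ioc 0 M, ∑ d ∈ n.divisors, h d
      = ∑ d ∈ Ioc 0 M, ((M / d : ℕ) : ℝ) * h d := by
  have key : ∀ n ∈ Ioc 0 M, ∑ d ∈ n.divisors, h d
      = ∑ d ∈ Ioc 0 M, if d ∣ n then h d else 0 := by
    intro n hn
    rw [mem_Ioc] at hn
    rw [← Finset.sum_filter]
    apply Finset.sum_congr _ (fun _ _ => rfl)
    ext d
    simp only [Nat.mem_divisors, Finset.mem_filter, mem_Ioc]
    constructor
    · rintro ⟨hdvd, _⟩
      exact ⟨⟨Nat.pos_of_dvd_of_pos hdvd hn.1, le_trans (Nat.le_of_dvd hn.1 hdvd) hn.2⟩, hdvd⟩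
    · rintro ⟨_, hdvd⟩
      exact ⟨hdvd, by omega⟩
  rw [Finset.sum_congr rfl key, Finset.sum_comm]
  refine Finset.sum_congr rfl fun d hd => ?_
  rw [← Finset.sum_filter, Finset.sum_const, Nat.Ioc_filter_dvd_card_eq_div, nsmul_eq_mul]

private lemma kronecker {a : ℕ → ℝ} (ha : ∀ d, 0 ≤ a d)
    (hs : Summable (fun d => a d / d)) :
    Tendsto (fun M : ℕ => (∑ d ∈ Ioc 0 M, a d) / M) atTop (𝓝 0) := by
  have hterm : ∀ d : ℕ, 0 ≤ a d / d := fun d => div_nonneg (ha d) (Nat.cast_nonneg d)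
  rw [Metric.tendsto_atTop]
  intro ε hε
  obtain ⟨K₀, hK₀⟩ := (Metric.tendsto_atTop.mp hs.hasSum.tendsto_sum_nat) (ε/4) (by linarith)
  set K := K₀ + 1 with hKdef
  set C := ∑ d ∈ Ico 1 K, a d with hC
  have hCnn : 0 ≤ C := Finset.sum_nonneg fun d _ => ha d
  refine ⟨K + ⌊2 * C / ε⌋₊ + 1, fun M hM => ?_⟩
  have hKM : K ≤ M := by omega
  have hMpos : 0 < M := by omega
  have hMr : (0:ℝ) < M := by exact_mod_cast hMpos
  -- tail sum bound
  have htail : ∑ d ∈ Ico K (M+1), a d / d ≤ ε/2 := by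
    have h1 : ∑ d ∈ Ico K (M+1), a d / d
        = ∑ d ∈ range (M+1), a d / d - ∑ d ∈ range K, a d / d :=
      Finset.sum_Ico_eq_sub _ (by omega)
    have h2 := hK₀ (M+1) (by omega)
    have h3 := hK₀ K (by omega)
    rw [Real.dist_eq] at h2 h3
    rw [h1]
    have := abs_lt.mp h2
    have := abs_lt.mp h3
    linarith [abs_lt.mp h2, abs_lt.mp h3]
  have hbound : ∑ d ∈ Ico K (M+1), a d ≤ M * (ε/2) := by
    calc ∑ d ∈ Ico K (M+1), a d ≤ ∑ d ∈ Ico K (M+1), (M:ℝ) * (a d / d) := by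
          refine Finset.sum_le_sum fun d hd => ?_
          rw [mem_Ico] at hd
          have hd1 : 1 ≤ d := by omega
          have hdr : (0:ℝ) < d := by exact_mod_cast hd1
          have hdM : (d:ℝ) ≤ M := by exact_mod_cast (by omega : d ≤ M)
          calc a d = (d:ℝ) * (a d / d) := by field_simp
            _ ≤ (M:ℝ) * (a d / d) := by gcongr; exact hterm d
      _ = (M:ℝ) * ∑ d ∈ Ico K (M+1), a d / d := by rw [Finset.mul_sum]
      _ ≤ M * (ε/2) := by gcongr
  have hsplit : ∑ d ∈ Ioc 0 M, a d = C + ∑ d ∈ Ico K (M+1), a d := by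
    rw [hC, Finset.sum_Ico_consecutive _ (by omega) (by omega)]
    apply Finset.sum_congr _ (fun _ _ => rfl)
    ext x
    simp only [mem_Ioc, mem_Ico]
    omega
  have hCM : C / M < ε/2 := by
    rw [div_lt_iff₀ hMr]
    have h5 : 2 * C / ε < (⌊2 * C / ε⌋₊ : ℝ) + 1 := Nat.lt_floor_add_one _
    have h6 : ((⌊2 * C / ε⌋₊ : ℝ) + 1) ≤ (M:ℝ) := by
      have : (⌊2 * C / ε⌋₊ + 1 : ℕ) ≤ M := by omega
      exact_mod_cast this
    have h7 : 2 * C / ε < (M:ℝ) := lt_of_lt_of_le h5 h6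
    rw [div_lt_iff₀ hε] at h7
    nlinarith
  have hnn : 0 ≤ ∑ d ∈ Ioc 0 M, a d := Finset.sum_nonneg fun d _ => ha d
  rw [Real.dist_eq, sub_zero, abs_of_nonneg (div_nonneg hnn hMr.le), hsplit, add_div]
  have h8 : (∑ d ∈ Ico K (M+1), a d) / M ≤ ε/2 := by
    rw [div_le_iff₀ hMr]; linarith
  linarith

private lemma floor_div_bound {x : ℝ} (hx : 1 ≤ x) {d : ℕ} (hd1 : 1 ≤ d) (hdM : d ≤ ⌊x⌋₊) :
    |((⌊x⌋₊ / d : ℕ) : ℝ) / x - 1 / d| ≤ 2 / x := by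
  set M := ⌊x⌋₊ with hMdef
  set q := M / d with hqdef
  have hx0 : (0:ℝ) < x := by linarith
  have hdr : (0:ℝ) < d := by exact_mod_cast hd1
  have hq1 : (q:ℝ) ≤ (M:ℝ) / d := Nat.cast_div_le
  have hq2 : (M:ℝ) < (q:ℝ) * d + d := by
    have h1 : M < (q + 1) * d := by
      have h2 := Nat.div_add_mod M d
      have h3 : M % d < d := Nat.mod_lt _ (by omega)
      calc M = d * q + M % d := h2.symm
        _ < d * q + d := by omega
        _ = (q + 1) * d := by ring
    have h4 : (M:ℝ) < ((q+1) * d : ℕ) := by exact_mod_cast h1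
    push_cast at h4
    linarith
  have hMx : (M:ℝ) ≤ x := Nat.floor_le hx0.le
  have hxM : x - 1 < (M:ℝ) := Nat.sub_one_lt_floor x
  have hqd : (q:ℝ) * d ≤ M := (le_div_iff₀ hdr).mp hq1
  have hd1r : (1:ℝ) ≤ d := by exact_mod_cast hd1
  rw [abs_le]
  constructor
  · -- 1/d - 2/x ≤ q/x
    rw [neg_le, neg_sub, div_sub_div _ _ hdr.ne' hx0.ne',
      div_le_div_iff₀ (mul_pos hdr hx0) hx0]
    have hxq : x - 2 * d ≤ (q:ℝ) * d := by linarith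
    nlinarith [mul_le_mul_of_nonneg_right hxq hx0.le]
  · have hq1d : (q:ℝ)/x ≤ 1/d := by
      rw [div_le_div_iff₀ hx0 hdr]
      linarith
    have : (0:ℝ) < 2/x := by positivity
    linarith


/-- **Main theorem, logarithmic part.**
Under the hypotheses of the main theorem, if moreover `g d > c > 0` for every `d ≥ 1`,
then the series `A_f* = ∑ (log g d)/d` converges, equals the same series restricted to
`d` coprime with `N`, and is the mean value of `log f`.  Moreover any mean value `A_f`
of `f` satisfies `A_f ≥ exp(A_f*) = ∏ g(d)^{1/d} > 0`, so `f` has a nonzero mean value. -/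
theorem mean_value_log_and_lower_bound
    (N : ℕ) (hN : 1 ≤ N) (g : ℕ → ℝ)
    (hg_pos : ∀ n : ℕ, 1 ≤ n → 0 < g n)
    (hg_le : ∀ n : ℕ, 1 ≤ n → g n ≤ 1)
    (hg_N : ∀ n : ℕ, 1 ≤ n → 1 < Nat.gcd n N → g n = 1)
    (hsum : Summable fun d : ℕ => (1 - g d) / d)
    (f : ℕ → ℝ) (hf : ∀ n : ℕ, f n = ∏ d ∈ n.divisors, g d)
    (c : ℝ) (hc : 0 < c) (hgc : ∀ d : ℕ, 1 ≤ d → c < g d) :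
    Summable (fun d : ℕ => Real.log (g d) / d) ∧
    (∑' d : ℕ, Real.log (g d) / d)
      = (∑' d : ℕ, if Nat.gcd d N = 1 then Real.log (g d) / d else 0) ∧
    Tendsto (fun x : ℝ => (∑ n ∈ Finset.Icc 1 ⌊x⌋₊, Real.log (f n)) / x) atTop
      (nhds (∑' d : ℕ, Real.log (g d) / d)) ∧
    Real.exp (∑' d : ℕ, Real.log (g d) / d) = (∏' d : ℕ, (g d) ^ ((d : ℝ)⁻¹)) ∧
    0 < Real.exp (∑' d : ℕ, Real.log (g d) / d) ∧
    ∀ Af : ℝ,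
      Tendsto (fun x : ℝ => (∑ n ∈ Finset.Icc 1 ⌊x⌋₊, f n) / x) atTop (nhds Af) →
        Real.exp (∑' d : ℕ, Real.log (g d) / d) ≤ Af ∧ Af ≠ 0 := by
  -- Part 1: summability
  have habs : Summable (fun d : ℕ => |Real.log (g d) / d|) := by
    apply Summable.of_nonneg_of_le (fun d => abs_nonneg _) ?_ (hsum.mul_left c⁻¹)
    intro d
    rcases Nat.eq_zero_or_pos d with rfl | hd
    · simp
    · have hdr : (0:ℝ) < d := by exact_mod_cast hd
      rw [abs_div, Nat.abs_cast]
      have h1 : |Real.log (g d)| ≤ (1 - g d) / c := log_abs_bound hc (hgc d hd) (hg_le d hd)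
      calc |Real.log (g d)| / d ≤ ((1 - g d) / c) / d := by gcongr
        _ = c⁻¹ * ((1 - g d) / d) := by ring
  have hS : Summable (fun d : ℕ => Real.log (g d) / d) := summable_abs_iff.mp habs
  set T := ∑' d : ℕ, Real.log (g d) / d with hT
  -- icc/ioc conversion
  have hIcc : ∀ M : ℕ, Finset.Icc 1 M = Finset.Ioc 0 M := by
    intro M; ext x; simp only [mem_Icc, mem_Ioc]; omega
  -- partial sums over Ioc tend to T
  have hIocRange : ∀ (F : ℕ → ℝ), F 0 = 0 →
      ∀ M : ℕ, ∑ d ∈ Ioc 0 M, F d = ∑ d ∈ range (M+1), F d := by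
    intro F hF0 M
    apply Finset.sum_subset
    · intro d hd; rw [mem_Ioc] at hd; exact mem_range.mpr (by omega)
    · intro d hmem hd
      rw [mem_range] at hmem
      rw [mem_Ioc] at hd
      have : d = 0 := by omega
      rw [this, hF0]
  have hF0 : Real.log (g 0) / (0:ℕ) = 0 := by simp
  have hpart : Tendsto (fun M : ℕ => ∑ d ∈ Ioc 0 M, Real.log (g d) / d) atTop (𝓝 T) := by
    have h0 := hIocRange (fun d => Real.log (g d) / d) hF0
    have h1 : Tendsto (fun M : ℕ => ∑ d ∈ range (M+1), Real.log (g d) / d) atTop (𝓝 T) :=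
      (hS.hasSum.tendsto_sum_nat).comp (tendsto_add_atTop_nat 1)
    exact h1.congr (fun M => (h0 M).symm)
  have hφ : Tendsto (fun x : ℝ => ∑ d ∈ Ioc 0 ⌊x⌋₊, Real.log (g d) / d) atTop (𝓝 T) :=
    hpart.comp tendsto_nat_floor_atTop
  -- Kronecker for |log g d|
  have habs' : Summable (fun d : ℕ => |Real.log (g d)| / d) := by
    apply habs.congr
    intro d
    rw [abs_div, Nat.abs_cast]
  have hKr : Tendsto (fun M : ℕ => (∑ d ∈ Ioc 0 M, |Real.log (g d)|) / M) atTop (𝓝 0) :=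
    kronecker (fun d => abs_nonneg _) habs'
  have hKr' : Tendsto (fun x : ℝ => (∑ d ∈ Ioc 0 ⌊x⌋₊, |Real.log (g d)|) / ⌊x⌋₊) atTop (𝓝 0) :=
    hKr.comp tendsto_nat_floor_atTop
  have hA : Tendsto (fun x : ℝ => (∑ d ∈ Ioc 0 ⌊x⌋₊, |Real.log (g d)|) / x) atTop (𝓝 0) := by
    refine squeeze_zero' ?_ ?_ hKr'
    · filter_upwards [eventually_ge_atTop (1:ℝ)] with x hx
      exact div_nonneg (Finset.sum_nonneg fun d _ => abs_nonneg _) (by linarith)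
    · filter_upwards [eventually_ge_atTop (1:ℝ)] with x hx
      have hfl : (1:ℕ) ≤ ⌊x⌋₊ := (Nat.one_le_floor_iff x).mpr hx
      have hflr : (0:ℝ) < ⌊x⌋₊ := by exact_mod_cast hfl
      have hle : (⌊x⌋₊:ℝ) ≤ x := Nat.floor_le (by linarith)
      gcongr
  -- the sum over Icc 1 M of log f equals weighted divisor sum
  have hlogsum : ∀ M : ℕ, ∑ n ∈ Finset.Icc 1 M, Real.log (f n)
      = ∑ d ∈ Ioc 0 M, ((M / d : ℕ) : ℝ) * Real.log (g d) := by
    intro M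
    rw [hIcc M, ← sum_divisors_swap]
    refine Finset.sum_congr rfl fun n hn => ?_
    rw [hf n]
    exact Real.log_prod fun d hd => ne_of_gt (hg_pos d (Nat.pos_of_mem_divisors hd))
  -- key error estimate
  have key : ∀ x : ℝ, 1 ≤ x →
      |(∑ n ∈ Finset.Icc 1 ⌊x⌋₊, Real.log (f n)) / x
        - ∑ d ∈ Ioc 0 ⌊x⌋₊, Real.log (g d) / d|
      ≤ 2 * ((∑ d ∈ Ioc 0 ⌊x⌋₊, |Real.log (g d)|) / x) := by
    intro x hx
    have hx0 : (0:ℝ) < x := by linarith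
    rw [hlogsum, Finset.sum_div, ← Finset.sum_sub_distrib]
    have hRHS : 2 * ((∑ d ∈ Ioc 0 ⌊x⌋₊, |Real.log (g d)|) / x)
        = ∑ d ∈ Ioc 0 ⌊x⌋₊, |Real.log (g d)| * (2 / x) := by
      rw [← Finset.sum_mul]
      ring
    rw [hRHS]
    refine (Finset.abs_sum_le_sum_abs _ _).trans (Finset.sum_le_sum fun d hd => ?_)
    rw [mem_Ioc] at hd
    have heq : ((⌊x⌋₊ / d : ℕ) : ℝ) * Real.log (g d) / x - Real.log (g d) / d
        = Real.log (g d) * (((⌊x⌋₊ / d : ℕ) : ℝ) / x - 1 / d) := by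
      field_simp
    rw [heq, abs_mul]
    exact mul_le_mul_of_nonneg_left (floor_div_bound hx hd.1 hd.2) (abs_nonneg _)
  -- Part 3
  have h3 : Tendsto (fun x : ℝ => (∑ n ∈ Finset.Icc 1 ⌊x⌋₊, Real.log (f n)) / x)
      atTop (𝓝 T) := by
    have hdiff : Tendsto (fun x : ℝ => (∑ n ∈ Finset.Icc 1 ⌊x⌋₊, Real.log (f n)) / x
        - ∑ d ∈ Ioc 0 ⌊x⌋₊, Real.log (g d) / d) atTop (𝓝 0) := by
      refine squeeze_zero_norm' ?_ (by simpa using hA.const_mul 2)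
      · filter_upwards [eventually_ge_atTop (1:ℝ)] with x hx
        simpa [Real.norm_eq_abs] using key x hx
    have := hdiff.add hφ
    simp only [sub_add_cancel, zero_add] at this
    exact this
  -- Part 2
  have h2 : T = ∑' d : ℕ, if Nat.gcd d N = 1 then Real.log (g d) / d else 0 := by
    apply tsum_congr
    intro d
    by_cases hd : Nat.gcd d N = 1
    · rw [if_pos hd]
    · rw [if_neg hd]
      rcases Nat.eq_zero_or_pos d with rfl | hd1
      · simp
      · have hpos : 0 < Nat.gcd d N := Nat.gcd_pos_of_pos_right d (by omega)
        have : 1 < Nat.gcd d N := by omega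
        rw [hg_N d hd1 this, Real.log_one, zero_div]
  -- Part 4
  have hprod : HasProd (fun d : ℕ => g d ^ ((d:ℝ)⁻¹)) (Real.exp T) := by
    apply HasProd.congr_fun (hS.hasSum.rexp)
    intro d
    rcases Nat.eq_zero_or_pos d with rfl | hd1
    · simp [Real.rpow_zero]
    · show g d ^ ((d:ℝ)⁻¹) = Real.exp (Real.log (g d) / d)
      rw [Real.rpow_def_of_pos (hg_pos d hd1), div_eq_mul_inv]
  refine ⟨hS, h2, h3, hprod.tprod_eq.symm, Real.exp_pos _, ?_⟩
  -- Part 6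
  intro Af hAf
  have hfpos : ∀ n : ℕ, 0 < f n := fun n => by
    rw [hf]; exact Finset.prod_pos fun d hd => hg_pos d (Nat.pos_of_mem_divisors hd)
  have jensen : ∀ M : ℕ, 1 ≤ M →
      Real.exp ((∑ n ∈ Finset.Icc 1 M, Real.log (f n)) / M)
        ≤ (∑ n ∈ Finset.Icc 1 M, f n) / M := by
    intro M hM
    have hMr : (0:ℝ) < M := by exact_mod_cast hM
    have hcard : (Finset.Icc 1 M).card = M := by rw [Nat.card_Icc]; omega
    have h₁ : ∑ _n ∈ Finset.Icc 1 M, (M:ℝ)⁻¹ = 1 := by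
      rw [Finset.sum_const, hcard, nsmul_eq_mul, mul_inv_cancel₀ hMr.ne']
    have hj := convexOn_exp.map_sum_le (t := Finset.Icc 1 M) (w := fun _ => (M:ℝ)⁻¹)
      (p := fun n => Real.log (f n)) (fun i _ => by positivity) h₁ (fun i _ => Set.mem_univ _)
    simp only [smul_eq_mul] at hj
    have hL : ∑ n ∈ Finset.Icc 1 M, (M:ℝ)⁻¹ * Real.log (f n)
        = (∑ n ∈ Finset.Icc 1 M, Real.log (f n)) / M := by
      rw [← Finset.mul_sum]; ring
    have hR : ∑ n ∈ Finset.Icc 1 M, (M:ℝ)⁻¹ * Real.exp (Real.log (f n))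
        = (∑ n ∈ Finset.Icc 1 M, f n) / M := by
      rw [← Finset.mul_sum, Finset.sum_congr rfl fun n _ => Real.exp_log (hfpos n)]
      ring
    rw [hL, hR] at hj
    exact hj
  have hu : Tendsto (fun M : ℕ => (∑ n ∈ Finset.Icc 1 M, f n) / (M:ℝ)) atTop (𝓝 Af) := by
    have := hAf.comp (tendsto_natCast_atTop_atTop (R := ℝ))
    simpa [Function.comp_def, Nat.floor_natCast] using this
  have hv : Tendsto (fun M : ℕ => Real.exp ((∑ n ∈ Finset.Icc 1 M, Real.log (f n)) / (M:ℝ)))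
      atTop (𝓝 (Real.exp T)) := by
    have h4 := h3.comp (tendsto_natCast_atTop_atTop (R := ℝ))
    have h5 : Tendsto (fun M : ℕ => (∑ n ∈ Finset.Icc 1 M, Real.log (f n)) / (M:ℝ))
        atTop (𝓝 T) := by
      simpa [Function.comp_def, Nat.floor_natCast] using h4
    exact (Real.continuous_exp.tendsto T).comp h5
  have hle : Real.exp T ≤ Af :=
    le_of_tendsto_of_tendsto hv hu (eventually_atTop.mpr ⟨1, fun M hM => jensen M hM⟩)
  exact ⟨hle, ((Real.exp_pos T).trans_le hle).ne'⟩
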